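/- With R̄_L(x,y,z) = R_L(x,y,z) − 1, one has the identity of formal power series (1−xz+x)² · R̄_{U4}(x,y,z) = x² · R̄_{UL_{S3}}(x,y,z), where U4 is the set of Schröder paths with at least one U step that both start and end with an H step. -/

import Mathlib

/-- A lattice path from `(0,0)` to `(2n,0)` with steps in `S` that never goes
below the x-axis, encoded as the list of its steps. -/
def IsPath (S : Set (ℤ × ℤ)) (n : ℕ) (p : List (ℤ × ℤ)) : Prop :=
  (∀ s ∈ p, s ∈ S) ∧
  (p.map Prod.fst).sum = 2 * n ∧
  (p.map Prod.snd).sum = 0 ∧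
  ∀ q : List (ℤ × ℤ), q <+: p → 0 ≤ (q.map Prod.snd).sum

def S1 : Set (ℤ × ℤ) := {(1, 1), (1, -1)}
def S2 : Set (ℤ × ℤ) := {s | ∃ r : ℤ, 0 < r ∧ (s = (r, r) ∨ s = (r, -r))}
def S3 : Set (ℤ × ℤ) := {(1, 1), (1, -1), (2, 0)}
def S4 : Set (ℤ × ℤ) := {s | ∃ r : ℤ, 0 < r ∧ (s = (r, r) ∨ s = (r, -r) ∨ s = (2 * r, 0))}
def S5 : Set (ℤ × ℤ) := {s | s = (1, 1) ∨ s = (1, -1) ∨ ∃ r : ℤ, 0 < r ∧ s = (2 * r, 0)}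
def S6 : Set (ℤ × ℤ) := {s | (∃ r : ℤ, 0 < r ∧ (s = (r, r) ∨ s = (r, -r))) ∨ s = (2, 0)}

/-- Number of runs: vertices lying between two consecutive steps of the same kind. -/
def runs (p : List (ℤ × ℤ)) : ℕ :=
  (p.zip p.tail).countP (fun q => q.1 == q.2)

/-- Number of diagonal runs: vertices between two consecutive equal non-horizontal steps. -/
def dr (p : List (ℤ × ℤ)) : ℕ :=
  (p.zip p.tail).countP (fun q => q.1 == q.2 && q.1.2 != 0)

/-- Number of horizontal runs: vertices between two consecutive horizontal steps. -/
def hr (p : List (ℤ × ℤ)) : ℕ :=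
  (p.zip p.tail).countP (fun q => q.1 == q.2 && q.1.2 == 0)

/-- The path has no horizontal step lying on the x-axis. -/
def NoFlatOnAxis (p : List (ℤ × ℤ)) : Prop :=
  ∀ q s, q ++ [s] <+: p → s.2 = 0 → (q.map Prod.snd).sum ≠ 0

noncomputable def Xv : MvPowerSeries (Fin 3) ℚ := MvPowerSeries.X 0
noncomputable def Yv : MvPowerSeries (Fin 3) ℚ := MvPowerSeries.X 1
noncomputable def Zv : MvPowerSeries (Fin 3) ℚ := MvPowerSeries.X 2

/-- The monomial `x^n y^a z^b` as an exponent vector. -/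
noncomputable def m3 (n a b : ℕ) : Fin 3 →₀ ℕ :=
  Finsupp.single (0 : Fin 3) n + Finsupp.single 1 a + Finsupp.single 2 b

noncomputable def Apoly : MvPowerSeries (Fin 3) ℚ := 1 - Xv * Zv
noncomputable def Bpoly : MvPowerSeries (Fin 3) ℚ := Xv + Yv * (1 - Xv * Zv)
noncomputable def Cpoly : MvPowerSeries (Fin 3) ℚ := 1 - Xv * Zv + Xv
noncomputable def Delta : MvPowerSeries (Fin 3) ℚ :=
  Apoly ^ 4 - 2 * Xv * Apoly ^ 2 * (Bpoly ^ 2 + Cpoly ^ 2)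
    + Xv ^ 2 * (Bpoly ^ 2 - Cpoly ^ 2) ^ 2

def U : ℤ × ℤ := (1, 1)
def D : ℤ × ℤ := (1, -1)

namespace AuxU4

def Hs : ℤ × ℤ := (2, 0)

lemma U_ne_Hs : U ≠ Hs := by simp [U, Hs, Prod.ext_iff]

lemma Hs_mem : Hs ∈ S3 := by simp [S3, Hs]

lemma fst_pos {s : ℤ × ℤ} (hs : s ∈ S3) : 1 ≤ s.1 := by
  rcases hs with h | h | h <;> subst h <;> norm_num

lemma prefix_cons_iff' {α : Type*} {q : List α} {a : α} {l : List α} :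
    q <+: a :: l ↔ q = [] ∨ ∃ t, q = a :: t ∧ t <+: l := by
  cases q with
  | nil => simp
  | cons x t =>
    simp only [List.cons_prefix_cons, List.cons_ne_nil, false_or]
    constructor
    · rintro ⟨rfl, h⟩; exact ⟨t, rfl, h⟩
    · rintro ⟨t', ht', h⟩
      obtain ⟨rfl, rfl⟩ : x = a ∧ t = t' := by
        constructor <;> injection ht'
      exact ⟨rfl, h⟩

lemma prefix_concat_iff' {α : Type*} {q l : List α} {x : α} :
    q <+: l ++ [x] ↔ q <+: l ∨ q = l ++ [x] := by
  constructor
  · rintro ⟨r, hr⟩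
    rcases List.eq_nil_or_concat r with rfl | ⟨r', y, rfl⟩
    · right; simpa using hr
    · left
      rw [List.concat_eq_append, ← List.append_assoc] at hr
      obtain ⟨h1, -⟩ := List.append_inj' hr rfl
      exact ⟨r', h1⟩
  · rintro (⟨r, rfl⟩ | rfl)
    · exact ⟨r ++ [x], by simp⟩
    · exact List.prefix_refl _

lemma isPath_cons_iff {n : ℕ} {p : List (ℤ × ℤ)} :
    IsPath S3 (n + 1) (Hs :: p) ↔ IsPath S3 n p := by
  unfold IsPath
  constructor
  · rintro ⟨h1, h2, h3, h4⟩
    refine ⟨fun s hs => h1 s (List.mem_cons_of_mem _ hs), ?_, ?_, ?_⟩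
    · simp only [List.map_cons, List.sum_cons, Hs] at h2
      push_cast at h2 ⊢; linarith
    · simpa [Hs] using h3
    · intro q hq
      have := h4 (Hs :: q) (List.cons_prefix_cons.mpr ⟨rfl, hq⟩)
      simpa [Hs] using this
  · rintro ⟨h1, h2, h3, h4⟩
    refine ⟨?_, ?_, ?_, ?_⟩
    · intro s hs
      rcases List.mem_cons.mp hs with rfl | hs
      · exact Hs_mem
      · exact h1 s hs
    · simp only [List.map_cons, List.sum_cons, Hs, h2]; push_cast; ring
    · simpa [Hs] using h3
    · intro q hq
      rcases prefix_cons_iff'.mp hq with rfl | ⟨t, rfl, ht⟩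
      · simp
      · simpa [Hs] using h4 t ht

lemma isPath_concat_iff {n : ℕ} {p : List (ℤ × ℤ)} :
    IsPath S3 (n + 1) (p ++ [Hs]) ↔ IsPath S3 n p := by
  unfold IsPath
  constructor
  · rintro ⟨h1, h2, h3, h4⟩
    refine ⟨fun s hs => h1 s (by simp [hs]), ?_, ?_, ?_⟩
    · simp only [List.map_append, List.sum_append, List.map_cons, List.map_nil,
        List.sum_cons, List.sum_nil, Hs] at h2
      push_cast at h2 ⊢; linarith
    · simpa [Hs] using h3
    · intro q hq
      exact h4 q (hq.trans ⟨[Hs], rfl⟩)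
  · rintro ⟨h1, h2, h3, h4⟩
    refine ⟨?_, ?_, ?_, ?_⟩
    · intro s hs
      rcases List.mem_append.mp hs with hs | hs
      · exact h1 s hs
      · simp only [List.mem_singleton] at hs; subst hs; exact Hs_mem
    · simp only [List.map_append, List.sum_append, List.map_cons, List.map_nil,
        List.sum_cons, List.sum_nil, Hs, h2]; push_cast; ring
    · simp only [List.map_append, List.sum_append, List.map_cons, List.map_nil,
        List.sum_cons, List.sum_nil, Hs, h3]; ring
    · intro q hq
      rcases prefix_concat_iff'.mp hq with hq | rfl
      · exact h4 q hq
      · simp only [List.map_append, List.sum_append, List.map_cons, List.map_nil,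
          List.sum_cons, List.sum_nil, Hs, h3]; norm_num

end AuxU4

namespace AuxU4

lemma dr_Hs_cons (y : ℤ × ℤ) (t : List (ℤ × ℤ)) :
    dr (Hs :: y :: t) = dr (y :: t) := by
  show List.countP _ ((Hs, y) :: (y :: t).zip t) = _
  rw [List.countP_cons]
  simp [Hs, dr]

lemma hr_Hs_cons (y : ℤ × ℤ) (t : List (ℤ × ℤ)) :
    hr (Hs :: y :: t) = hr (y :: t) + (if y = Hs then 1 else 0) := by
  show List.countP _ ((Hs, y) :: (y :: t).zip t) = _
  rw [List.countP_cons]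
  simp only [hr]
  congr 1
  by_cases h : y = Hs
  · subst h; simp [Hs]
  · have h' : Hs ≠ y := fun e => h e.symm
    simp [h, h']

lemma zip_tail_concat (x : ℤ × ℤ) :
    ∀ (p : List (ℤ × ℤ)) (hp : p ≠ []),
      (p ++ [x]).zip (p ++ [x]).tail = p.zip p.tail ++ [(p.getLast hp, x)]
  | [a], _ => rfl
  | a :: b :: t, _ => by
    have IH := zip_tail_concat x (b :: t) (by simp)
    show (a, b) :: ((b :: t ++ [x]).zip ((b :: t ++ [x]).tail)) = _
    rw [IH, List.getLast_cons (by simp : (b :: t) ≠ [])]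
    rfl

lemma dr_concat (p : List (ℤ × ℤ)) (hp : p ≠ []) :
    dr (p ++ [Hs]) = dr p := by
  have h0 : ∀ y : ℤ × ℤ, ((y == Hs) && (y.2 != 0)) = false := by
    intro y
    by_cases h : y = Hs
    · simp [h, Hs]
    · simp [Hs]; rintro rfl; rfl
  simp only [dr, zip_tail_concat Hs p hp, List.countP_append, List.countP_cons,
    List.countP_nil, h0]
  simp

lemma hr_concat (p : List (ℤ × ℤ)) (hp : p ≠ []) :
    hr (p ++ [Hs]) = hr p + (if p.getLast? = some Hs then 1 else 0) := by
  have h0 : ∀ y : ℤ × ℤ, ((y == Hs) && (y.2 == (0 : ℤ))) = (y == Hs) := by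
    intro y
    by_cases h : y = Hs
    · simp [h, Hs]
    · simp [Hs]; rintro rfl; rfl
  simp only [hr, zip_tail_concat Hs p hp, List.countP_append, List.countP_cons,
    List.countP_nil, h0, List.getLast?_eq_getLast hp]
  congr 1
  by_cases h : p.getLast hp = Hs <;> simp [h]

lemma head?_concat {p : List (ℤ × ℤ)} (hp : p ≠ []) (x : ℤ × ℤ) :
    (p ++ [x]).head? = p.head? := by
  cases p with
  | nil => exact absurd rfl hp
  | cons a t => rfl

lemma getLast?_cons_of_ne_nil {p : List (ℤ × ℤ)} (hp : p ≠ []) (x : ℤ × ℤ) :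
    (x :: p).getLast? = p.getLast? := by
  cases p with
  | nil => exact absurd rfl hp
  | cons a t => simp

end AuxU4

namespace AuxU4

/-- The path classes we count. -/
abbrev T (Q : List (ℤ × ℤ) → Prop) (n a b : ℕ) : Type :=
  {p : List (ℤ × ℤ) // IsPath S3 n p ∧ U ∈ p ∧ Q p ∧ dr p = a ∧ hr p = b}

lemma length_le_sum (p : List (ℤ × ℤ)) (h : ∀ s ∈ p, s ∈ S3) :
    (p.length : ℤ) ≤ (p.map Prod.fst).sum := by
  induction p with
  | nil => simp
  | cons x t ih =>
    have hx := fst_pos (h x (List.mem_cons_self (a := x) (l := t)))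
    have := ih (fun s hs => h s (List.mem_cons_of_mem _ hs))
    simp only [List.length_cons, List.map_cons, List.sum_cons]
    push_cast
    linarith

lemma S3_finite : S3.Finite := by
  have : S3 = {((1 : ℤ), (1 : ℤ)), (1, -1), (2, 0)} := rfl
  rw [this]
  exact (Set.finite_singleton _).insert _ |>.insert _

lemma finite_paths {n : ℕ} {P : List (ℤ × ℤ) → Prop}
    (hP : ∀ p, P p → IsPath S3 n p) : Finite {p : List (ℤ × ℤ) // P p} := by
  haveI : Finite {x : ℤ × ℤ // x ∈ S3} := S3_finite.to_subtype
  have hfin : ((fun l : List {x : ℤ × ℤ // x ∈ S3} => l.map Subtype.val) ''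
      {l | l.length ≤ 2 * n}).Finite :=
    Set.Finite.image _ (List.finite_length_le _ _)
  have hsub : {p : List (ℤ × ℤ) | P p} ⊆
      (fun l : List {x : ℤ × ℤ // x ∈ S3} => l.map Subtype.val) '' {l | l.length ≤ 2 * n} := by
    intro p hp
    obtain ⟨h1, h2, -, -⟩ := hP p hp
    refine ⟨p.attach.map (fun x => ⟨x.1, h1 x.1 x.2⟩), ?_, ?_⟩
    · have hl := length_le_sum p h1
      rw [h2] at hl
      simp only [Set.mem_setOf_eq, List.length_map, List.length_attach]
      exact_mod_cast hl
    · simp [List.map_map, Function.comp_def]; exact List.attach_map_subtype_val p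
  exact (hfin.subset hsub).to_subtype

instance (Q : List (ℤ × ℤ) → Prop) (n a b : ℕ) : Finite (T Q n a b) :=
  finite_paths (fun p hp => hp.1)

lemma card_T_zero (Q : List (ℤ × ℤ) → Prop) (a b : ℕ) : Nat.card (T Q 0 a b) = 0 := by
  have : IsEmpty (T Q 0 a b) := by
    constructor
    rintro ⟨p, hP, hU, -⟩
    have h1 := length_le_sum p hP.1
    rw [hP.2.1] at h1
    have h2 : 1 ≤ p.length := List.length_pos_iff.mpr (List.ne_nil_of_mem hU)
    have : (1 : ℤ) ≤ (p.length : ℤ) := by exact_mod_cast h2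
    omega
  exact Nat.card_of_isEmpty

lemma card_split {α : Type*} (P R : α → Prop) [Finite {x // P x}] :
    Nat.card {x // P x} = Nat.card {x // P x ∧ R x} + Nat.card {x // P x ∧ ¬R x} := by
  classical
  haveI : Finite {x // P x ∧ R x} :=
    Finite.of_injective (fun y : {x // P x ∧ R x} => (⟨y.1, y.2.1⟩ : {x // P x}))
      (fun y z h => by cases y; cases z; simpa using h)
  haveI : Finite {x // P x ∧ ¬R x} :=
    Finite.of_injective (fun y : {x // P x ∧ ¬R x} => (⟨y.1, y.2.1⟩ : {x // P x}))
      (fun y z h => by cases y; cases z; simpa using h)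
  have e : {x // P x ∧ R x} ⊕ {x // P x ∧ ¬R x} ≃ {x // P x} :=
    { toFun := Sum.elim (fun y => ⟨y.1, y.2.1⟩) (fun y => ⟨y.1, y.2.1⟩)
      invFun := fun y => if h : R y.1 then .inl ⟨y.1, y.2, h⟩ else .inr ⟨y.1, y.2, h⟩
      left_inv := by
        rintro (⟨x, hx⟩ | ⟨x, hx⟩)
        · simp [hx.2]
        · simp [hx.2]
      right_inv := by
        rintro ⟨x, hx⟩
        by_cases h : R x <;> simp [h] }
  rw [← Nat.card_congr e, Nat.card_sum]

lemma head_cases {p : List (ℤ × ℤ)} (hU : U ∈ p) (hh : p.head? = some Hs) :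
    ∃ y t, p = Hs :: y :: t := by
  cases p with
  | nil => simp at hh
  | cons x t =>
    obtain rfl : x = Hs := by simpa using hh
    cases t with
    | nil =>
      rcases List.mem_singleton.mp hU with h
      exact absurd h U_ne_Hs
    | cons y t' => exact ⟨y, t', rfl⟩

lemma last_cases {p : List (ℤ × ℤ)} (hU : U ∈ p) (hh : p.getLast? = some Hs) :
    ∃ t, p = t ++ [Hs] ∧ t ≠ [] := by
  rcases List.eq_nil_or_concat p with rfl | ⟨t, y, rfl⟩
  · simp at hh
  · rw [List.concat_eq_append] at *
    obtain rfl : y = Hs := by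
      rw [List.getLast?_concat] at hh
      simpa using hh
    refine ⟨t, rfl, ?_⟩
    rintro rfl
    rcases List.mem_singleton.mp hU with h
    exact absurd h U_ne_Hs

end AuxU4

namespace AuxU4

variable {Q : List (ℤ × ℤ) → Prop}

lemma card_strip_head (hQ : ∀ x (p : List (ℤ × ℤ)), p ≠ [] → (Q (x :: p) ↔ Q p)) (n a b : ℕ) :
    Nat.card (T (fun p => p.head? = some Hs ∧ Q p) (n + 1) a b)
      = (if b = 0 then 0
          else Nat.card (T (fun p => p.head? = some Hs ∧ Q p) n a (b - 1)))
        + Nat.card (T (fun p => ¬p.head? = some Hs ∧ Q p) n a b) := by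
  classical
  have key : Nat.card (T (fun p => p.head? = some Hs ∧ Q p) (n + 1) a b)
      = Nat.card {p : List (ℤ × ℤ) //
          (IsPath S3 n p ∧ U ∈ p ∧ Q p ∧ dr p = a) ∧
          hr p + (if p.head? = some Hs then 1 else 0) = b} := by
    have mem : ∀ p : List (ℤ × ℤ),
        ((IsPath S3 n p ∧ U ∈ p ∧ Q p ∧ dr p = a) ∧
          hr p + (if p.head? = some Hs then 1 else 0) = b) →
        (IsPath S3 (n + 1) (Hs :: p) ∧ U ∈ (Hs :: p) ∧
          ((Hs :: p).head? = some Hs ∧ Q (Hs :: p)) ∧ dr (Hs :: p) = a ∧ hr (Hs :: p) = b) := by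
      rintro p ⟨⟨h1, h2, h3, h4⟩, h5⟩
      have hne : p ≠ [] := List.ne_nil_of_mem h2
      obtain ⟨y, t, rfl⟩ := List.exists_cons_of_ne_nil hne
      refine ⟨isPath_cons_iff.mpr h1, List.mem_cons_of_mem _ h2,
        ⟨rfl, (hQ Hs _ (by simp)).mpr h3⟩, by rw [dr_Hs_cons]; exact h4, ?_⟩
      rw [hr_Hs_cons]
      by_cases hy : y = Hs
      · rw [if_pos hy]; rw [if_pos (by simp [hy])] at h5; exact h5
      · rw [if_neg hy]; rw [if_neg (by simp [hy])] at h5; exact h5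
    symm
    refine Nat.card_eq_of_bijective (fun x => ⟨Hs :: x.1, mem x.1 x.2⟩) ⟨?_, ?_⟩
    · intro x y h
      apply Subtype.ext
      have := congrArg Subtype.val h
      simpa using this
    · rintro ⟨p, h1, h2, ⟨hh, hq⟩, h4, h5⟩
      obtain ⟨y, t, rfl⟩ := head_cases h2 hh
      have hU' : U ∈ y :: t := by
        rcases List.mem_cons.mp h2 with h | h
        · exact absurd h U_ne_Hs
        · exact h
      refine ⟨⟨y :: t, ⟨⟨isPath_cons_iff.mp h1, hU', (hQ Hs _ (by simp)).mp hq, ?_⟩, ?_⟩⟩, rfl⟩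
      · rw [dr_Hs_cons] at h4; exact h4
      · rw [hr_Hs_cons] at h5
        by_cases hy : y = Hs
        · rw [if_pos (by simp [hy])]; rw [if_pos hy] at h5; exact h5
        · rw [if_neg (by simp [hy])]; rw [if_neg hy] at h5; exact h5
  rw [key]
  haveI : Finite {p : List (ℤ × ℤ) //
      (IsPath S3 n p ∧ U ∈ p ∧ Q p ∧ dr p = a) ∧
      hr p + (if p.head? = some Hs then 1 else 0) = b} :=
    finite_paths (fun p hp => hp.1.1)
  rw [card_split
    (fun p : List (ℤ × ℤ) =>
      (IsPath S3 n p ∧ U ∈ p ∧ Q p ∧ dr p = a) ∧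
        hr p + (if p.head? = some Hs then 1 else 0) = b)
    (fun p : List (ℤ × ℤ) => p.head? = some Hs)]
  congr 1
  · cases b with
    | zero =>
      rw [if_pos rfl]
      have : IsEmpty {p : List (ℤ × ℤ) //
          ((IsPath S3 n p ∧ U ∈ p ∧ Q p ∧ dr p = a) ∧
            hr p + (if p.head? = some Hs then 1 else 0) = 0) ∧ p.head? = some Hs} := by
        constructor
        rintro ⟨p, ⟨⟨-, h5⟩, hh⟩⟩
        rw [if_pos hh] at h5
        omega
      exact Nat.card_of_isEmpty
    | succ b' =>
      rw [if_neg (by omega)]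
      apply Nat.card_congr
      apply Equiv.subtypeEquivRight
      intro p
      constructor
      · rintro ⟨⟨⟨h1, h2, h3, h4⟩, h5⟩, h6⟩
        rw [if_pos h6] at h5
        exact ⟨h1, h2, ⟨h6, h3⟩, h4, by omega⟩
      · rintro ⟨h1, h2, ⟨h6, h3⟩, h4, h5⟩
        exact ⟨⟨⟨h1, h2, h3, h4⟩, by rw [if_pos h6]; omega⟩, h6⟩
  · apply Nat.card_congr
    apply Equiv.subtypeEquivRight
    intro p
    constructor
    · rintro ⟨⟨⟨h1, h2, h3, h4⟩, h5⟩, h6⟩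
      rw [if_neg h6] at h5
      exact ⟨h1, h2, ⟨h6, h3⟩, h4, by omega⟩
    · rintro ⟨h1, h2, ⟨h6, h3⟩, h4, h5⟩
      exact ⟨⟨⟨h1, h2, h3, h4⟩, by rw [if_neg h6]; omega⟩, h6⟩

end AuxU4

namespace AuxU4

lemma card_strip_last {Q : List (ℤ × ℤ) → Prop}
    (hQ : ∀ p : List (ℤ × ℤ), p ≠ [] → (Q (p ++ [Hs]) ↔ Q p)) (n a b : ℕ) :
    Nat.card (T (fun p => Q p ∧ p.getLast? = some Hs) (n + 1) a b)
      = (if b = 0 then 0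
          else Nat.card (T (fun p => Q p ∧ p.getLast? = some Hs) n a (b - 1)))
        + Nat.card (T (fun p => Q p ∧ ¬p.getLast? = some Hs) n a b) := by
  classical
  have key : Nat.card (T (fun p => Q p ∧ p.getLast? = some Hs) (n + 1) a b)
      = Nat.card {p : List (ℤ × ℤ) //
          (IsPath S3 n p ∧ U ∈ p ∧ Q p ∧ dr p = a) ∧
          hr p + (if p.getLast? = some Hs then 1 else 0) = b} := by
    have mem : ∀ p : List (ℤ × ℤ),
        ((IsPath S3 n p ∧ U ∈ p ∧ Q p ∧ dr p = a) ∧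
          hr p + (if p.getLast? = some Hs then 1 else 0) = b) →
        (IsPath S3 (n + 1) (p ++ [Hs]) ∧ U ∈ (p ++ [Hs]) ∧
          (Q (p ++ [Hs]) ∧ (p ++ [Hs]).getLast? = some Hs) ∧
          dr (p ++ [Hs]) = a ∧ hr (p ++ [Hs]) = b) := by
      rintro p ⟨⟨h1, h2, h3, h4⟩, h5⟩
      have hne : p ≠ [] := List.ne_nil_of_mem h2
      refine ⟨isPath_concat_iff.mpr h1, by simp [h2],
        ⟨(hQ p hne).mpr h3, List.getLast?_concat⟩, ?_, ?_⟩
      · rw [dr_concat p hne]; exact h4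
      · rw [hr_concat p hne]; exact h5
    symm
    refine Nat.card_eq_of_bijective (fun x => ⟨x.1 ++ [Hs], mem x.1 x.2⟩) ⟨?_, ?_⟩
    · intro x y h
      apply Subtype.ext
      have := congrArg Subtype.val h
      simpa using this
    · rintro ⟨p, h1, h2, ⟨hq, hh⟩, h4, h5⟩
      obtain ⟨t, rfl, htne⟩ := last_cases h2 hh
      have hU' : U ∈ t := by
        rcases List.mem_append.mp h2 with h | h
        · exact h
        · exact absurd (List.mem_singleton.mp h) U_ne_Hs
      refine ⟨⟨t, ⟨⟨isPath_concat_iff.mp h1, hU', (hQ t htne).mp hq, ?_⟩, ?_⟩⟩, rfl⟩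
      · rw [dr_concat t htne] at h4; exact h4
      · rw [hr_concat t htne] at h5; exact h5
  rw [key]
  haveI : Finite {p : List (ℤ × ℤ) //
      (IsPath S3 n p ∧ U ∈ p ∧ Q p ∧ dr p = a) ∧
      hr p + (if p.getLast? = some Hs then 1 else 0) = b} :=
    finite_paths (fun p hp => hp.1.1)
  rw [card_split
    (fun p : List (ℤ × ℤ) =>
      (IsPath S3 n p ∧ U ∈ p ∧ Q p ∧ dr p = a) ∧
        hr p + (if p.getLast? = some Hs then 1 else 0) = b)
    (fun p : List (ℤ × ℤ) => p.getLast? = some Hs)]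
  congr 1
  · cases b with
    | zero =>
      rw [if_pos rfl]
      have : IsEmpty {p : List (ℤ × ℤ) //
          ((IsPath S3 n p ∧ U ∈ p ∧ Q p ∧ dr p = a) ∧
            hr p + (if p.getLast? = some Hs then 1 else 0) = 0) ∧ p.getLast? = some Hs} := by
        constructor
        rintro ⟨p, ⟨⟨-, h5⟩, hh⟩⟩
        rw [if_pos hh] at h5
        omega
      exact Nat.card_of_isEmpty
    | succ b' =>
      rw [if_neg (by omega)]
      apply Nat.card_congr
      apply Equiv.subtypeEquivRight
      intro p
      constructor
      · rintro ⟨⟨⟨h1, h2, h3, h4⟩, h5⟩, h6⟩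
        rw [if_pos h6] at h5
        exact ⟨h1, h2, ⟨h3, h6⟩, h4, by omega⟩
      · rintro ⟨h1, h2, ⟨h3, h6⟩, h4, h5⟩
        exact ⟨⟨⟨h1, h2, h3, h4⟩, by rw [if_pos h6]; omega⟩, h6⟩
  · apply Nat.card_congr
    apply Equiv.subtypeEquivRight
    intro p
    constructor
    · rintro ⟨⟨⟨h1, h2, h3, h4⟩, h5⟩, h6⟩
      rw [if_neg h6] at h5
      exact ⟨h1, h2, ⟨h3, h6⟩, h4, by omega⟩
    · rintro ⟨h1, h2, ⟨h3, h6⟩, h4, h5⟩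
      exact ⟨⟨⟨h1, h2, h3, h4⟩, by rw [if_neg h6]; omega⟩, h6⟩

end AuxU4

namespace AuxU4

noncomputable def ser (Q : List (ℤ × ℤ) → Prop) : MvPowerSeries (Fin 3) ℚ :=
  fun d => (Nat.card (T Q (d 0) (d 1) (d 2)) : ℚ)

lemma coeff_ser (Q : List (ℤ × ℤ) → Prop) (d : Fin 3 →₀ ℕ) :
    MvPowerSeries.coeff d (ser Q) = (Nat.card (T Q (d 0) (d 1) (d 2)) : ℚ) :=
  MvPowerSeries.coeff_apply (ser Q) d

lemma m3_apply_0 (n a b : ℕ) : (m3 n a b) 0 = n := by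
  simp [m3, Finsupp.single_apply]

lemma m3_apply_1 (n a b : ℕ) : (m3 n a b) 1 = a := by
  simp [m3, Finsupp.single_apply]

lemma m3_apply_2 (n a b : ℕ) : (m3 n a b) 2 = b := by
  simp [m3, Finsupp.single_apply]

lemma eq_m3 (d : Fin 3 →₀ ℕ) : d = m3 (d 0) (d 1) (d 2) := by
  ext i
  fin_cases i <;> simp [m3, Finsupp.single_apply]

lemma coeff_X_mul' (F : MvPowerSeries (Fin 3) ℚ) (d : Fin 3 →₀ ℕ) :
    MvPowerSeries.coeff d (Xv * F)
      = if 1 ≤ d 0 then MvPowerSeries.coeff (d - Finsupp.single 0 1) F else 0 := by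
  rw [Xv, MvPowerSeries.X_def, MvPowerSeries.coeff_monomial_mul]
  simp only [Finsupp.single_le_iff, one_mul]

lemma coeff_XZ_mul' (F : MvPowerSeries (Fin 3) ℚ) (d : Fin 3 →₀ ℕ) :
    MvPowerSeries.coeff d (Xv * Zv * F)
      = if 1 ≤ d 0 ∧ 1 ≤ d 2 then
          MvPowerSeries.coeff (d - (Finsupp.single 0 1 + Finsupp.single 2 1)) F
        else 0 := by
  rw [Xv, Zv, MvPowerSeries.X_def, MvPowerSeries.X_def,
    MvPowerSeries.monomial_mul_monomial, one_mul, MvPowerSeries.coeff_monomial_mul, one_mul]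
  have hiff : (Finsupp.single (0 : Fin 3) 1 + Finsupp.single 2 1 ≤ d) ↔ (1 ≤ d 0 ∧ 1 ≤ d 2) := by
    rw [Finsupp.le_def]
    constructor
    · intro h
      refine ⟨?_, ?_⟩
      · have := h 0; simpa [Finsupp.single_apply] using this
      · have := h 2; simpa [Finsupp.single_apply] using this
    · rintro ⟨h0, h2⟩ i
      fin_cases i <;> simp [Finsupp.single_apply] <;> omega
  simp only [hiff]

lemma sub_single0_apply (d : Fin 3 →₀ ℕ) :
    ((d - Finsupp.single 0 1 : Fin 3 →₀ ℕ)) 0 = d 0 - 1 ∧ ((d - Finsupp.single 0 1 : Fin 3 →₀ ℕ)) 1 = d 1 ∧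
      ((d - Finsupp.single 0 1 : Fin 3 →₀ ℕ)) 2 = d 2 := by
  refine ⟨?_, ?_, ?_⟩ <;> simp [Finsupp.tsub_apply, Finsupp.single_apply]

lemma sub_single02_apply (d : Fin 3 →₀ ℕ) :
    ((d - (Finsupp.single 0 1 + Finsupp.single 2 1) : Fin 3 →₀ ℕ)) 0 = d 0 - 1 ∧
      ((d - (Finsupp.single 0 1 + Finsupp.single 2 1) : Fin 3 →₀ ℕ)) 1 = d 1 ∧
      ((d - (Finsupp.single 0 1 + Finsupp.single 2 1) : Fin 3 →₀ ℕ)) 2 = d 2 - 1 := by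
  refine ⟨?_, ?_, ?_⟩ <;> simp [Finsupp.tsub_apply, Finsupp.single_apply]

lemma ser_eq_head {Q : List (ℤ × ℤ) → Prop}
    (hQ : ∀ x (p : List (ℤ × ℤ)), p ≠ [] → (Q (x :: p) ↔ Q p)) :
    ser (fun p => p.head? = some Hs ∧ Q p)
      = Xv * Zv * ser (fun p => p.head? = some Hs ∧ Q p)
        + Xv * ser (fun p => ¬p.head? = some Hs ∧ Q p) := by
  apply MvPowerSeries.ext
  intro d
  rw [map_add, coeff_XZ_mul', coeff_X_mul', coeff_ser]
  obtain ⟨e0, e1, e2⟩ := sub_single0_apply d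
  obtain ⟨f0, f1, f2⟩ := sub_single02_apply d
  rcases Nat.eq_zero_or_pos (d 0) with h0 | h0
  · rw [if_neg (by omega), if_neg (by omega), h0, card_T_zero]
    norm_num
  · obtain ⟨m, hm⟩ : ∃ m, d 0 = m + 1 := ⟨d 0 - 1, by omega⟩
    rcases Nat.eq_zero_or_pos (d 2) with h2 | h2
    · rw [if_neg (show ¬(1 ≤ d 0 ∧ 1 ≤ d 2) by omega),
        if_pos (show 1 ≤ d 0 by omega), coeff_ser, e0, e1, e2, hm]
      simp only [Nat.add_sub_cancel]
      have hc := card_strip_head hQ m (d 1) (d 2)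
      rw [if_pos h2] at hc
      rw [hc]
      push_cast
      ring
    · rw [if_pos (show (1 ≤ d 0 ∧ 1 ≤ d 2) from ⟨by omega, by omega⟩), coeff_ser, f0, f1, f2,
        if_pos (show 1 ≤ d 0 by omega), coeff_ser, e0, e1, e2, hm]
      simp only [Nat.add_sub_cancel]
      have hc := card_strip_head hQ m (d 1) (d 2)
      rw [if_neg (by omega)] at hc
      rw [hc]
      push_cast
      ring

lemma ser_eq_last {Q : List (ℤ × ℤ) → Prop}
    (hQ : ∀ p : List (ℤ × ℤ), p ≠ [] → (Q (p ++ [Hs]) ↔ Q p)) :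
    ser (fun p => Q p ∧ p.getLast? = some Hs)
      = Xv * Zv * ser (fun p => Q p ∧ p.getLast? = some Hs)
        + Xv * ser (fun p => Q p ∧ ¬p.getLast? = some Hs) := by
  apply MvPowerSeries.ext
  intro d
  rw [map_add, coeff_XZ_mul', coeff_X_mul', coeff_ser]
  obtain ⟨e0, e1, e2⟩ := sub_single0_apply d
  obtain ⟨f0, f1, f2⟩ := sub_single02_apply d
  rcases Nat.eq_zero_or_pos (d 0) with h0 | h0
  · rw [if_neg (by omega), if_neg (by omega), h0, card_T_zero]
    norm_num
  · obtain ⟨m, hm⟩ : ∃ m, d 0 = m + 1 := ⟨d 0 - 1, by omega⟩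
    rcases Nat.eq_zero_or_pos (d 2) with h2 | h2
    · rw [if_neg (show ¬(1 ≤ d 0 ∧ 1 ≤ d 2) by omega),
        if_pos (show 1 ≤ d 0 by omega), coeff_ser, e0, e1, e2, hm]
      simp only [Nat.add_sub_cancel]
      have hc := card_strip_last hQ m (d 1) (d 2)
      rw [if_pos h2] at hc
      rw [hc]
      push_cast
      ring
    · rw [if_pos (show (1 ≤ d 0 ∧ 1 ≤ d 2) from ⟨by omega, by omega⟩), coeff_ser, f0, f1, f2,
        if_pos (show 1 ≤ d 0 by omega), coeff_ser, e0, e1, e2, hm]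
      simp only [Nat.add_sub_cancel]
      have hc := card_strip_last hQ m (d 1) (d 2)
      rw [if_neg (by omega)] at hc
      rw [hc]
      push_cast
      ring

end AuxU4

namespace AuxU4

lemma card_partition (n a b : ℕ) :
    Nat.card {p : List (ℤ × ℤ) // IsPath S3 n p ∧ U ∈ p ∧ dr p = a ∧ hr p = b}
      = Nat.card (T (fun p => p.head? = some Hs ∧ p.getLast? = some Hs) n a b)
        + Nat.card (T (fun p => p.head? = some Hs ∧ ¬p.getLast? = some Hs) n a b)
        + Nat.card (T (fun p => ¬p.head? = some Hs ∧ p.getLast? = some Hs) n a b)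
        + Nat.card (T (fun p => ¬p.head? = some Hs ∧ ¬p.getLast? = some Hs) n a b) := by
  classical
  haveI : Finite {p : List (ℤ × ℤ) // IsPath S3 n p ∧ U ∈ p ∧ dr p = a ∧ hr p = b} :=
    finite_paths fun p hp => hp.1
  haveI : Finite {p : List (ℤ × ℤ) //
      (IsPath S3 n p ∧ U ∈ p ∧ dr p = a ∧ hr p = b) ∧ p.head? = some Hs} :=
    finite_paths fun p hp => hp.1.1
  haveI : Finite {p : List (ℤ × ℤ) //
      (IsPath S3 n p ∧ U ∈ p ∧ dr p = a ∧ hr p = b) ∧ ¬p.head? = some Hs} :=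
    finite_paths fun p hp => hp.1.1
  rw [card_split (fun p : List (ℤ × ℤ) => IsPath S3 n p ∧ U ∈ p ∧ dr p = a ∧ hr p = b)
    (fun p => p.head? = some Hs)]
  rw [card_split (fun p : List (ℤ × ℤ) =>
      (IsPath S3 n p ∧ U ∈ p ∧ dr p = a ∧ hr p = b) ∧ p.head? = some Hs)
    (fun p => p.getLast? = some Hs)]
  rw [card_split (fun p : List (ℤ × ℤ) =>
      (IsPath S3 n p ∧ U ∈ p ∧ dr p = a ∧ hr p = b) ∧ ¬p.head? = some Hs)
    (fun p => p.getLast? = some Hs)]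
  have c1 : Nat.card {p : List (ℤ × ℤ) //
        ((IsPath S3 n p ∧ U ∈ p ∧ dr p = a ∧ hr p = b) ∧ p.head? = some Hs) ∧
          p.getLast? = some Hs}
      = Nat.card (T (fun p => p.head? = some Hs ∧ p.getLast? = some Hs) n a b) :=
    Nat.card_congr (Equiv.subtypeEquivRight fun p => by tauto)
  have c2 : Nat.card {p : List (ℤ × ℤ) //
        ((IsPath S3 n p ∧ U ∈ p ∧ dr p = a ∧ hr p = b) ∧ p.head? = some Hs) ∧
          ¬p.getLast? = some Hs}
      = Nat.card (T (fun p => p.head? = some Hs ∧ ¬p.getLast? = some Hs) n a b) :=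
    Nat.card_congr (Equiv.subtypeEquivRight fun p => by tauto)
  have c3 : Nat.card {p : List (ℤ × ℤ) //
        ((IsPath S3 n p ∧ U ∈ p ∧ dr p = a ∧ hr p = b) ∧ ¬p.head? = some Hs) ∧
          p.getLast? = some Hs}
      = Nat.card (T (fun p => ¬p.head? = some Hs ∧ p.getLast? = some Hs) n a b) :=
    Nat.card_congr (Equiv.subtypeEquivRight fun p => by tauto)
  have c4 : Nat.card {p : List (ℤ × ℤ) //
        ((IsPath S3 n p ∧ U ∈ p ∧ dr p = a ∧ hr p = b) ∧ ¬p.head? = some Hs) ∧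
          ¬p.getLast? = some Hs}
      = Nat.card (T (fun p => ¬p.head? = some Hs ∧ ¬p.getLast? = some Hs) n a b) :=
    Nat.card_congr (Equiv.subtypeEquivRight fun p => by tauto)
  rw [c1, c2, c3, c4]
  ring

end AuxU4


open AuxU4

/-- part of Lemma 3.1: `(1−xz+x)²·R̄_{U4} = x²·R̄_{UL_{S3}}`, where `U4` consists of Schröder paths with at least one U step starting and ending with an H step. -/
theorem lemma_U4 (Rsub Rall : MvPowerSeries (Fin 3) ℚ)
    (hRsub : ∀ n a b : ℕ, MvPowerSeries.coeff (m3 n a b) Rsub =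
      (Nat.card {p : List (ℤ × ℤ) //
        IsPath S3 n p ∧ U ∈ p ∧ p.head? = some (2, 0) ∧ p.getLast? = some (2, 0) ∧ dr p = a ∧ hr p = b} : ℚ))
    (hRall : ∀ n a b : ℕ, MvPowerSeries.coeff (m3 n a b) Rall =
      (Nat.card {p : List (ℤ × ℤ) //
        IsPath S3 n p ∧ U ∈ p ∧ dr p = a ∧ hr p = b} : ℚ)) :
    Cpoly ^ 2 * Rsub = Xv ^ 2 * Rall := by
  have e1 : ser (fun p => p.head? = some Hs ∧ p.getLast? = some Hs)
      = Xv * Zv * ser (fun p => p.head? = some Hs ∧ p.getLast? = some Hs)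
        + Xv * ser (fun p => p.head? = some Hs ∧ ¬p.getLast? = some Hs) :=
    ser_eq_last (Q := fun p : List (ℤ × ℤ) => p.head? = some Hs)
      (fun p hp => by show (p ++ [Hs]).head? = some Hs ↔ p.head? = some Hs; rw [head?_concat hp])
  have e2 : ser (fun p => p.head? = some Hs ∧ p.getLast? = some Hs)
      = Xv * Zv * ser (fun p => p.head? = some Hs ∧ p.getLast? = some Hs)
        + Xv * ser (fun p => ¬p.head? = some Hs ∧ p.getLast? = some Hs) :=
    ser_eq_head (Q := fun p : List (ℤ × ℤ) => p.getLast? = some Hs)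
      (fun x p hp => by
        show (x :: p).getLast? = some Hs ↔ p.getLast? = some Hs
        rw [getLast?_cons_of_ne_nil hp])
  have e3 : ser (fun p => p.head? = some Hs ∧ ¬p.getLast? = some Hs)
      = Xv * Zv * ser (fun p => p.head? = some Hs ∧ ¬p.getLast? = some Hs)
        + Xv * ser (fun p => ¬p.head? = some Hs ∧ ¬p.getLast? = some Hs) :=
    ser_eq_head (Q := fun p : List (ℤ × ℤ) => ¬p.getLast? = some Hs)
      (fun x p hp => by
        show ¬(x :: p).getLast? = some Hs ↔ ¬p.getLast? = some Hs
        rw [getLast?_cons_of_ne_nil hp])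
  have hsub : Rsub = ser (fun p => p.head? = some Hs ∧ p.getLast? = some Hs) := by
    apply MvPowerSeries.ext
    intro d
    rw [eq_m3 d, hRsub, coeff_ser, m3_apply_0, m3_apply_1, m3_apply_2]
    congr 1
    exact Nat.card_congr (Equiv.subtypeEquivRight fun p => by
      show _ ↔ IsPath S3 (d 0) p ∧ U ∈ p ∧ (p.head? = some Hs ∧ p.getLast? = some Hs) ∧ _
      unfold Hs
      tauto)
  have hall : Rall = ser (fun p => p.head? = some Hs ∧ p.getLast? = some Hs)
      + ser (fun p => p.head? = some Hs ∧ ¬p.getLast? = some Hs)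
      + ser (fun p => ¬p.head? = some Hs ∧ p.getLast? = some Hs)
      + ser (fun p => ¬p.head? = some Hs ∧ ¬p.getLast? = some Hs) := by
    apply MvPowerSeries.ext
    intro d
    rw [eq_m3 d, hRall]
    simp only [map_add, coeff_ser, m3_apply_0, m3_apply_1, m3_apply_2]
    rw [card_partition (d 0) (d 1) (d 2)]
    push_cast
    ring
  rw [hsub, hall, show Cpoly = 1 - Xv * Zv + Xv from rfl]
  linear_combination ((1 : MvPowerSeries (Fin 3) ℚ) - Xv * Zv + Xv) * e1 + Xv * e2 + Xv * e3
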